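/- Fix p ≥ 1 and let V(r) = r^p·log(1 + r) for r ≥ 0. Then the associated Young function Φ_V(r) = sup_{s > 0} V(rs)/V(s) equals r^p·max(r, 1) for all r ≥ 0; that is, Φ_V(r) = r^{p+1} for r ≥ 1 and Φ_V(r) = r^p for 0 ≤ r ≤ 1. -/

import Mathlib

open Real Filter Set Topology

private lemma tlog0 : Filter.Tendsto (fun x : ℝ => Real.log (1+x) / x)
    (nhdsWithin 0 (Set.Ioi 0)) (nhds 1) := by
  have h : HasDerivAt (fun x : ℝ => Real.log (1+x)) 1 0 := by
    have h1 : HasDerivAt (fun x : ℝ => 1 + x) 1 0 := (hasDerivAt_id (0:ℝ)).const_add 1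
    have h2 : HasDerivAt Real.log 1 (1 + (0:ℝ)) := by
      rw [add_zero]; simpa using Real.hasDerivAt_log one_ne_zero
    have h3 : HasDerivAt (fun x : ℝ => Real.log (1+x)) (1*1) 0 := h2.comp 0 h1
    simpa using h3
  have h2 := (hasDerivAt_iff_tendsto_slope.mp h).mono_left
    (nhdsWithin_mono 0 (fun x hx => ne_of_gt hx))
  refine h2.congr (fun x => ?_)
  simp [slope_def_field]

theorem stmt13 (p : ℝ) (hp : 1 ≤ p) (r : ℝ) (hr : 0 ≤ r) :
    sSup ((fun s : ℝ => ((r * s) ^ p * Real.log (1 + r * s)) /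
      (s ^ p * Real.log (1 + s))) '' Set.Ioi 0) = r ^ p * max r 1 := by
  set f : ℝ → ℝ := fun s => ((r * s) ^ p * Real.log (1 + r * s)) /
      (s ^ p * Real.log (1 + s)) with hfdef
  rcases eq_or_lt_of_le hr with h0 | h0
  · -- r = 0
    have : f '' Set.Ioi 0 = {0} := by
      apply Set.eq_singleton_iff_nonempty_unique_mem.mpr
      constructor
      · exact ⟨f 1, 1, by norm_num, rfl⟩
      · rintro x ⟨s, hs, rfl⟩
        simp [hfdef, ← h0, Real.zero_rpow (by linarith : p ≠ 0)]
    rw [this, csSup_singleton, ← h0, Real.zero_rpow (by linarith : p ≠ 0), zero_mul]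
  -- r > 0
  have hlogpos : ∀ s : ℝ, 0 < s → 0 < Real.log (1 + s) :=
    fun s hs => Real.log_pos (by linarith)
  have hfr : ∀ s ∈ Set.Ioi (0:ℝ), f s = r ^ p * (Real.log (1 + r * s) / Real.log (1 + s)) := by
    intro s hs
    have hs' : (0:ℝ) < s := hs
    have hsp : (0:ℝ) < s ^ p := Real.rpow_pos_of_pos hs' p
    show (r * s) ^ p * Real.log (1 + r * s) / (s ^ p * Real.log (1 + s))
      = r ^ p * (Real.log (1 + r * s) / Real.log (1 + s))
    rw [Real.mul_rpow h0.le hs'.le]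
    have h1 : r ^ p * s ^ p * Real.log (1 + r * s)
        = s ^ p * (r ^ p * Real.log (1 + r * s)) := by ring
    rw [h1, mul_div_mul_left _ _ hsp.ne', mul_div_assoc]
  have hub : ∀ s ∈ Set.Ioi (0:ℝ), Real.log (1 + r * s) / Real.log (1 + s) ≤ max r 1 := by
    intro s hs
    have hs' : (0:ℝ) < s := hs
    rw [div_le_iff₀ (hlogpos s hs')]
    rcases le_total r 1 with hr1 | hr1
    · rw [max_eq_right hr1, one_mul]
      apply Real.log_le_log (by positivity)
      nlinarith
    · rw [max_eq_left hr1]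
      have hb : 1 + r * s ≤ (1 + s) ^ r :=
        one_add_mul_self_le_rpow_one_add (by linarith) hr1
      calc Real.log (1 + r * s) ≤ Real.log ((1 + s) ^ r) :=
            Real.log_le_log (by positivity) hb
        _ = r * Real.log (1 + s) := Real.log_rpow (by linarith) r
  refine IsLUB.csSup_eq ?_ ⟨f 1, Set.mem_image_of_mem f (by norm_num : (1:ℝ) ∈ Set.Ioi 0)⟩
  constructor
  · rintro x ⟨s, hs, rfl⟩
    rw [hfr s hs]
    exact mul_le_mul_of_nonneg_left (hub s hs) (Real.rpow_nonneg h0.le p)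
  · intro b hb
    -- b is an upper bound; show r^p * max r 1 ≤ b using a limit
    rcases le_total r 1 with hr1 | hr1
    · -- limit as s → ∞ : ratio → 1
      rw [max_eq_right hr1]
      have hlim : Filter.Tendsto (fun s : ℝ => Real.log (1 + r * s) / Real.log (1 + s))
          Filter.atTop (nhds 1) := by
        have hlow : Filter.Tendsto
            (fun s : ℝ => 1 + Real.log r / Real.log (1 + s)) Filter.atTop (nhds 1) := by
          have hd : Filter.Tendsto (fun s : ℝ => Real.log (1 + s)) Filter.atTop Filter.atTop :=
            Real.tendsto_log_atTop.comp (tendsto_atTop_add_const_left _ 1 tendsto_id)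
          have := Filter.Tendsto.div_atTop (tendsto_const_nhds (x := Real.log r)) hd
          simpa using (tendsto_const_nhds (x := (1:ℝ))).add this
        apply tendsto_of_tendsto_of_tendsto_of_le_of_le' hlow tendsto_const_nhds
        · filter_upwards [Filter.eventually_gt_atTop (0:ℝ)] with s hs
          have hls := hlogpos s hs
          have hmul : r * (1 + s) ≤ 1 + r * s := by nlinarith
          have key : Real.log r + Real.log (1 + s) ≤ Real.log (1 + r * s) := by
            rw [← Real.log_mul (ne_of_gt h0) (by linarith)]
            exact Real.log_le_log (by positivity) hmul
          have heq : 1 + Real.log r / Real.log (1 + s)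
              = (Real.log (1 + s) + Real.log r) / Real.log (1 + s) := by field_simp
          rw [heq, div_le_div_iff₀ hls hls]
          exact mul_le_mul_of_nonneg_right (by linarith) hls.le
        · filter_upwards [Filter.eventually_gt_atTop (0:ℝ)] with s hs
          have := hub s hs
          rwa [max_eq_right hr1] at this
      have hflim : Filter.Tendsto f Filter.atTop (nhds (r ^ p * 1)) := by
        apply Filter.Tendsto.congr' _ ((tendsto_const_nhds).mul hlim)
        filter_upwards [Filter.eventually_gt_atTop (0:ℝ)] with s hs
        exact (hfr s hs).symm
      refine le_of_tendsto hflim ?_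
      filter_upwards [Filter.eventually_gt_atTop (0:ℝ)] with s hs
      exact hb ⟨s, hs, rfl⟩
    · -- limit as s → 0⁺ : ratio → r
      rw [max_eq_left hr1]
      have hmap : Filter.Tendsto (fun s : ℝ => r * s)
          (nhdsWithin 0 (Set.Ioi 0)) (nhdsWithin 0 (Set.Ioi 0)) := by
        apply tendsto_nhdsWithin_of_tendsto_nhds_of_eventually_within
        · have : Filter.Tendsto (fun s : ℝ => r * s) (nhds 0) (nhds (r * 0)) :=
            (continuous_const.mul continuous_id).tendsto 0
          rw [mul_zero] at this
          exact this.mono_left nhdsWithin_le_nhds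
        · filter_upwards [self_mem_nhdsWithin] with s hs
          exact mul_pos h0 hs
      have hnum : Filter.Tendsto (fun s : ℝ => Real.log (1 + r * s) / (r * s))
          (nhdsWithin 0 (Set.Ioi 0)) (nhds 1) := tlog0.comp hmap
      have hlim : Filter.Tendsto (fun s : ℝ => Real.log (1 + r * s) / Real.log (1 + s))
          (nhdsWithin 0 (Set.Ioi 0)) (nhds r) := by
        have h1 : Filter.Tendsto
            (fun s : ℝ => r * ((Real.log (1 + r * s) / (r * s)) / (Real.log (1 + s) / s)))
            (nhdsWithin 0 (Set.Ioi 0)) (nhds (r * (1 / 1))) :=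
          (tendsto_const_nhds).mul (hnum.div tlog0 one_ne_zero)
        rw [mul_one_div, div_one] at h1
        apply h1.congr'
        filter_upwards [self_mem_nhdsWithin] with s hs
        have hs' : (0:ℝ) < s := hs
        have hls : Real.log (1 + s) ≠ 0 := (hlogpos s hs').ne'
        field_simp
      have hflim : Filter.Tendsto f (nhdsWithin 0 (Set.Ioi 0)) (nhds (r ^ p * r)) := by
        apply Filter.Tendsto.congr' _ ((tendsto_const_nhds).mul hlim)
        filter_upwards [self_mem_nhdsWithin] with s hs
        exact (hfr s hs).symm
      refine le_of_tendsto hflim ?_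
      filter_upwards [self_mem_nhdsWithin] with s hs
      exact hb ⟨s, hs, rfl⟩
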